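/- Let l = (l_1, ..., l_n) be a tuple of positive integers, k ≥ 1, and let A(k, l) be the matrix defined as above. Set 𝔩 = gcd(l_1, ..., l_n). Then the (n - 1 + k)-th determinantal divisor of A(k, l) (the gcd of all (n-1+k) × (n-1+k) minors) divides 𝔩^{k-1}. -/

import Mathlib

set_option maxHeartbeats 1000000


/-- The `(k+n) × (k·n)` integer matrix `A(k,l)`: the first `k` rows consist of `k` copies
of `l` in block-diagonal position, the last `n` rows are `k` horizontally concatenated
copies of the `n × n` identity matrix. -/
def matrixA (k n : ℕ) (l : Fin n → ℕ) : Matrix (Fin k ⊕ Fin n) (Fin k × Fin n) ℤ :=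
  fun r c =>
    match r with
    | Sum.inl i => if i = c.1 then (l c.2 : ℤ) else 0
    | Sum.inr j => if j = c.2 then 1 else 0

/-- If `d` divides `a * f j` for all `j ∈ s`, then `d` divides `a` times the gcd. -/
lemma dvd_mul_finset_gcd {ι : Type*} (s : Finset ι) (f : ι → ℕ) (a d : ℤ)
    (h : ∀ j ∈ s, d ∣ a * (f j : ℤ)) : d ∣ a * ((s.gcd f : ℕ) : ℤ) := by
  classical
  induction s using Finset.induction with
  | empty => simp
  | insert i s hx ih =>
    rw [Finset.gcd_insert]
    have h1 : d ∣ a * (f i : ℤ) := h i (Finset.mem_insert_self i s)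
    have h2 : d ∣ a * ((s.gcd f : ℕ) : ℤ) := ih fun j hj => h j (Finset.mem_insert_of_mem hj)
    have h3 : d ∣ gcd (a * (f i : ℤ)) (a * ((s.gcd f : ℕ) : ℤ)) := dvd_gcd h1 h2
    rw [gcd_mul_left] at h3
    have h4 : gcd ((f i : ℤ)) ((s.gcd f : ℕ) : ℤ) = ((Nat.gcd (f i) (s.gcd f) : ℕ) : ℤ) := by
      rw [← Int.coe_gcd, Int.gcd_natCast_natCast]
    rw [h4] at h3
    have h5 : normalize a * ((Nat.gcd (f i) (s.gcd f) : ℕ) : ℤ) ∣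
        a * ((Nat.gcd (f i) (s.gcd f) : ℕ) : ℤ) :=
      ((normalize_associated a).mul_right _).dvd
    exact h3.trans h5

/-- If `d` divides `c` times every product of `m` values of `l`, then `d` divides
`c * (gcd l)^m`. -/
lemma dvd_mul_pow_gcd (n : ℕ) (l : Fin n → ℕ) (d : ℤ) :
    ∀ (m : ℕ) (c : ℤ), (∀ t : Fin m → Fin n, d ∣ c * ∏ i, (l (t i) : ℤ)) →
      d ∣ c * (((Finset.univ.gcd l : ℕ) : ℤ)) ^ m := by
  intro m
  induction m with
  | zero =>
    intro c h
    simpa using h Fin.elim0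
  | succ m ih =>
    intro c h
    have key : ∀ j : Fin n, d ∣ (c * (((Finset.univ.gcd l : ℕ) : ℤ)) ^ m) * (l j : ℤ) := by
      intro j
      have := ih (c * (l j : ℤ)) (fun t => by
        have h' := h (Fin.cons j t)
        have : (∏ i, (l ((Fin.cons j t : Fin (m+1) → Fin n) i) : ℤ))
            = (l j : ℤ) * ∏ i, (l (t i) : ℤ) := by
          rw [Fin.prod_univ_succ]
          simp
        rw [this, ← mul_assoc] at h'
        exact h')
      calc d ∣ c * (l j : ℤ) * (((Finset.univ.gcd l : ℕ) : ℤ)) ^ m := this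
        _ = (c * (((Finset.univ.gcd l : ℕ) : ℤ)) ^ m) * (l j : ℤ) := by ring
    have := dvd_mul_finset_gcd Finset.univ l (c * (((Finset.univ.gcd l : ℕ) : ℤ)) ^ m) d
      (fun j _ => key j)
    calc d ∣ (c * (((Finset.univ.gcd l : ℕ) : ℤ)) ^ m) * ((Finset.univ.gcd l : ℕ) : ℤ) := this
      _ = c * (((Finset.univ.gcd l : ℕ) : ℤ)) ^ (m + 1) := by ring

/-- Each product `∏ l(t i)` over a `(k-1)`-tuple is (up to sign) an
`(n-1+k) × (n-1+k)` minor of `A(k,l)`. -/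
lemma gcd_minors_dvd_prod (k n : ℕ) (hk : 1 ≤ k) (hn : 1 ≤ n) (l : Fin n → ℕ)
    (t : Fin (k - 1) → Fin n) :
    (Finset.univ.gcd fun p :
        (Fin (n - 1 + k) ↪ (Fin k ⊕ Fin n)) × (Fin (n - 1 + k) ↪ Fin k × Fin n) =>
      ((matrixA k n l).submatrix p.1 p.2).det) ∣ ∏ i, (l (t i) : ℤ) := by
  classical
  have hkn : n - 1 + k = (k - 1) + n := by omega
  let e : Fin (n - 1 + k) ≃ (Fin (k - 1) ⊕ Fin n) :=
    (finCongr hkn).trans finSumFinEquiv.symm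
  let q1 : (Fin (k - 1) ⊕ Fin n) ↪ (Fin k ⊕ Fin n) :=
    ⟨Sum.elim (fun i => Sum.inl ⟨i.1 + 1, by have := i.isLt; omega⟩) Sum.inr, by
      refine Function.Injective.sumElim (fun a b h => ?_) Sum.inr_injective (fun a b => Sum.inl_ne_inr)
      · exact Fin.ext (by have := Fin.mk.inj_iff.mp (Sum.inl.inj h); omega)⟩
  let q2 : (Fin (k - 1) ⊕ Fin n) ↪ (Fin k × Fin n) :=
    ⟨Sum.elim (fun i => (⟨i.1 + 1, by have := i.isLt; omega⟩, t i))
        (fun j => (⟨0, by omega⟩, j)), by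
      refine Function.Injective.sumElim (fun a b h => ?_) (fun a b h => (Prod.mk.inj h).2)
        (fun a b h => by have := Fin.mk.inj_iff.mp (Prod.mk.inj h).1; omega)
      · exact Fin.ext (by have := Fin.mk.inj_iff.mp (Prod.mk.inj h).1; omega)⟩
  have hM : (matrixA k n l).submatrix q1 q2 =
      Matrix.fromBlocks (Matrix.diagonal fun i => (l (t i) : ℤ)) 0
        (Matrix.of fun (j : Fin n) (i : Fin (k - 1)) => if j = t i then (1 : ℤ) else 0) 1 := by
    ext r c
    rcases r with i | j <;> rcases c with i' | j' <;>
      simp only [Matrix.submatrix_apply, q1, q2, Function.Embedding.coeFn_mk,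
        Sum.elim_inl, Sum.elim_inr, matrixA,
        Matrix.fromBlocks_apply₁₁, Matrix.fromBlocks_apply₁₂, Matrix.fromBlocks_apply₂₁,
        Matrix.fromBlocks_apply₂₂, Matrix.diagonal_apply, Matrix.of_apply, Matrix.zero_apply,
        Matrix.one_apply]
    · by_cases hii : i = i'
      · subst hii; simp
      · rw [if_neg hii]; exact (if_neg (fun hcon : (⟨i.1 + 1, _⟩ : Fin k) = ⟨i'.1 + 1, _⟩ =>
          hii (Fin.ext (by have := Fin.mk.inj_iff.mp hcon; omega))))
    · refine if_neg ?_
      intro hcon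
      exact absurd (Fin.mk.inj_iff.mp hcon) (by omega)
    · rfl
    · rfl
  have hdet : ((matrixA k n l).submatrix (e.toEmbedding.trans q1) (e.toEmbedding.trans q2)).det
      = ∏ i, (l (t i) : ℤ) := by
    have : (matrixA k n l).submatrix (e.toEmbedding.trans q1) (e.toEmbedding.trans q2)
        = ((matrixA k n l).submatrix q1 q2).submatrix e e := by
      ext r c; rfl
    rw [this, Matrix.det_submatrix_equiv_self, hM, Matrix.det_fromBlocks_zero₁₂,
      Matrix.det_diagonal, Matrix.det_one, mul_one]
  calc (Finset.univ.gcd fun p :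
        (Fin (n - 1 + k) ↪ (Fin k ⊕ Fin n)) × (Fin (n - 1 + k) ↪ Fin k × Fin n) =>
      ((matrixA k n l).submatrix p.1 p.2).det)
      ∣ ((matrixA k n l).submatrix (e.toEmbedding.trans q1) (e.toEmbedding.trans q2)).det :=
        Finset.gcd_dvd (Finset.mem_univ (e.toEmbedding.trans q1, e.toEmbedding.trans q2))
    _ = ∏ i, (l (t i) : ℤ) := hdet

/-- the `(n - 1 + k)`-th determinantal divisor of `A(k, l)` (the gcd of all
its `(n-1+k) × (n-1+k)` minors) divides `𝔩^(k-1)`, where `𝔩 = gcd(l_1, ..., l_n)`. -/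
theorem stmt_1 (k n : ℕ) (hk : 1 ≤ k) (hn : 1 ≤ n) (l : Fin n → ℕ)
    (hl : ∀ j, 0 < l j) :
    (Finset.univ.gcd fun p :
        (Fin (n - 1 + k) ↪ (Fin k ⊕ Fin n)) × (Fin (n - 1 + k) ↪ Fin k × Fin n) =>
      ((matrixA k n l).submatrix p.1 p.2).det) ∣ (((Finset.univ.gcd l : ℕ) : ℤ)) ^ (k - 1) := by
  have := dvd_mul_pow_gcd n l
    (Finset.univ.gcd fun p :
        (Fin (n - 1 + k) ↪ (Fin k ⊕ Fin n)) × (Fin (n - 1 + k) ↪ Fin k × Fin n) =>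
      ((matrixA k n l).submatrix p.1 p.2).det) (k - 1) 1
    (fun t => by rw [one_mul]; exact gcd_minors_dvd_prod k n hk hn l t)
  simpa using this
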